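/- For every finite system A and every entropy function H, there exists a unique information function I on the nonempty subsets of A satisfying the defining linear system: for every nonempty B ⊆ A, ∑_{nonempty S ⊆ A with S ∩ B ≠ ∅} I(S) = H(B). (That is, the 2^|A| − 1 linear equations in the 2^|A| − 1 unknowns I(S) have exactly one solution.) -/

import Mathlib

open Finset

variable {U : Type*}

/-- `I` solves the defining linear system of the information function of the system `A`
(with entropy function `H`): for every nonempty `B ⊆ A`, the sum of `I S` over all
nonempty `S ⊆ A` with `S ∩ B ≠ ∅` equals `H B`. -/
def IsInfoFn [DecidableEq U] (H : Finset U → ℝ) (A : Finset U) (I : Finset U → ℝ) : Prop :=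
  ∀ B : Finset U, B ⊆ A → B.Nonempty →
    ∑ S ∈ A.powerset.filter (fun S => S.Nonempty ∧ (S ∩ B).Nonempty), I S = H B

/-- The complexity of the system `A` at scale `k` (with information function `I`):
the sum of `I S` over all nonempty `S ⊆ A` with `|S| ≥ k`. -/
def complexityAt (A : Finset U) (I : Finset U → ℝ) (k : ℕ) : ℝ :=
  ∑ S ∈ A.powerset.filter (fun S => S.Nonempty ∧ k ≤ S.card), I S

/-- Conditional information `I(f(S)|S)` of a dependency `S` of `A`, relative to the primed
system `A'` with priming map `f`, computed with the information function `IJ` of the joint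
system `A ∪ A'`: the sum of `IJ T` over all nonempty `T ⊆ A ∪ A'` with `T ∩ A' = f(S)`
and `T ∩ A ≠ S`. -/
def condInfo [DecidableEq U] (A A' : Finset U) (f : U → U) (IJ : Finset U → ℝ)
    (S : Finset U) : ℝ :=
  ∑ T ∈ (A ∪ A').powerset.filter
      (fun T => T.Nonempty ∧ T ∩ A' = S.image f ∧ T ∩ A ≠ S), IJ T

/-- The noise complexity `C_{A'|A}(k)`: the sum of the conditional informations
`I(f(S)|S)` over all nonempty `S ⊆ A` with `|S| ≥ k`. -/
def noiseComplexityAt [DecidableEq U] (A A' : Finset U) (f : U → U) (IJ : Finset U → ℝ)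
    (k : ℕ) : ℝ :=
  ∑ S ∈ A.powerset.filter (fun S => S.Nonempty ∧ k ≤ S.card), condInfo A A' f IJ S

section AuxProof

variable [DecidableEq U]

/-- The prescribed partial sums `G C = ∑_{S ⊆ C} I S` forced by the linear system. -/
private def Gfun (H : Finset U → ℝ) (A C : Finset U) : ℝ :=
  if C = A then (if A.Nonempty then H A else 0) else H A - H (A \ C)

private lemma Gfun_empty (H : Finset U → ℝ) (A : Finset U) : Gfun H A ∅ = 0 := by
  unfold Gfun
  split
  · next h => rw [if_neg]; simp [← h]
  · simp

private lemma neg_one_pow_sum (x : Finset U) :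
    (∑ m ∈ x.powerset, (-1 : ℝ) ^ m.card) = if x = ∅ then 1 else 0 := by
  have h := @Finset.sum_powerset_neg_one_pow_card U _ x
  calc (∑ m ∈ x.powerset, (-1 : ℝ) ^ m.card)
      = ((∑ m ∈ x.powerset, (-1 : ℤ) ^ m.card : ℤ) : ℝ) := by push_cast; rfl
    _ = _ := by rw [h]; split <;> simp

private lemma mobius_sum (g : Finset U → ℝ) (C : Finset U) :
    ∑ S ∈ C.powerset, ∑ T ∈ S.powerset, (-1 : ℝ) ^ (S \ T).card * g T = g C := by
  rw [Finset.sum_comm' (s' := fun T => Finset.Icc T C) (t' := C.powerset)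
    (f := fun S T => (-1 : ℝ) ^ (S \ T).card * g T) ?_]
  · have key : ∀ T ∈ C.powerset,
        (∑ S ∈ Finset.Icc T C, (-1 : ℝ) ^ (S \ T).card * g T)
          = if T = C then g T else 0 := by
      intro T hT
      rw [mem_powerset] at hT
      rw [← Finset.sum_mul]
      have h1 : (∑ S ∈ Finset.Icc T C, (-1 : ℝ) ^ (S \ T).card)
          = ∑ R ∈ (C \ T).powerset, (-1 : ℝ) ^ R.card := by
        rw [Finset.Icc_eq_image_powerset hT, Finset.sum_image ?_]
        · refine Finset.sum_congr rfl fun R hR => ?_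
          rw [mem_powerset] at hR
          have hd : Disjoint T R := Finset.disjoint_sdiff.mono_right hR
          rw [Finset.union_sdiff_cancel_left hd]
        · intro R1 h1 R2 h2 heq
          rw [Finset.mem_coe, mem_powerset] at h1 h2
          have d1 : Disjoint T R1 := Finset.disjoint_sdiff.mono_right h1
          have d2 : Disjoint T R2 := Finset.disjoint_sdiff.mono_right h2
          beta_reduce at heq
          rw [← Finset.union_sdiff_cancel_left d1, heq, Finset.union_sdiff_cancel_left d2]
      rw [h1, neg_one_pow_sum]
      by_cases hTC : T = C
      · rw [if_pos hTC, if_pos (by simp [hTC]), one_mul]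
      · rw [if_neg hTC, if_neg ?_, zero_mul]
        rw [Finset.sdiff_eq_empty_iff_subset]
        exact fun h => hTC (hT.antisymm h)
    rw [Finset.sum_congr rfl key, Finset.sum_ite_eq' C.powerset C g,
      if_pos (Finset.mem_powerset_self C)]
  · intro S T
    simp only [mem_powerset, Finset.mem_Icc]
    constructor
    · rintro ⟨h1, h2⟩; exact ⟨⟨h2, h1⟩, h2.trans h1⟩
    · rintro ⟨⟨h1, h2⟩, _⟩; exact ⟨h2, h1⟩

private lemma filter_partition (A B : Finset U) (hB : B ⊆ A) :
    A.powerset.filter (fun S => S.Nonempty ∧ (S ∩ B).Nonempty)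
      = A.powerset.filter (fun S => S.Nonempty)
          \ (A \ B).powerset.filter (fun S => S.Nonempty) := by
  ext S
  simp only [mem_filter, mem_sdiff, mem_powerset, not_and]
  constructor
  · rintro ⟨hSA, hSne, hint⟩
    obtain ⟨x, hx⟩ := hint
    have hxS := (Finset.mem_inter.1 hx).1
    have hxB := (Finset.mem_inter.1 hx).2
    exact ⟨⟨hSA, hSne⟩, fun hS _ => (Finset.mem_sdiff.1 (hS hxS)).2 hxB⟩
  · rintro ⟨⟨hSA, hSne⟩, hnot⟩
    refine ⟨hSA, hSne, ?_⟩
    by_contra hempty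
    rw [Finset.not_nonempty_iff_eq_empty] at hempty
    refine hnot (fun x hxS => Finset.mem_sdiff.2 ⟨hSA hxS, fun hxB => ?_⟩) hSne
    exact Finset.notMem_empty x (hempty ▸ Finset.mem_inter.2 ⟨hxS, hxB⟩)

private lemma sum_powerset_eq_filter {I : Finset U → ℝ} (hI0 : I ∅ = 0) (C : Finset U) :
    ∑ S ∈ C.powerset.filter (fun S => S.Nonempty), I S = ∑ S ∈ C.powerset, I S := by
  apply Finset.sum_filter_of_ne
  intro S _ hS
  rw [Finset.nonempty_iff_ne_empty]
  intro h
  exact hS (h ▸ hI0)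

/-- Any solution of the linear system has the prescribed partial sums. -/
private lemma sums_eq {H : Finset U → ℝ} {A : Finset U} {I : Finset U → ℝ}
    (h0 : ∀ S : Finset U, ¬(S.Nonempty ∧ S ⊆ A) → I S = 0) (hI : IsInfoFn H A I) :
    ∀ C ⊆ A, ∑ S ∈ C.powerset, I S = Gfun H A C := by
  have hI0 : I ∅ = 0 := h0 ∅ (by simp)
  have hAfull : A.Nonempty → ∑ S ∈ A.powerset, I S = H A := by
    intro hA
    rw [← sum_powerset_eq_filter hI0]
    have h := hI A Finset.Subset.rfl hA
    rw [filter_partition A A Finset.Subset.rfl] at h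
    have hemp : ((A \ A).powerset.filter (fun S => S.Nonempty)) = ∅ := by
      rw [Finset.sdiff_self, Finset.powerset_empty, Finset.filter_singleton]
      simp
    rw [hemp, Finset.sdiff_empty] at h
    exact h
  intro C hC
  by_cases hCA : C = A
  · subst hCA
    rcases C.eq_empty_or_nonempty with h | h
    · subst h; simp [Gfun, hI0]
    · rw [hAfull h, Gfun, if_pos rfl, if_pos h]
  · have hACne : (A \ C).Nonempty := by
      rw [Finset.sdiff_nonempty]
      exact fun h => hCA (hC.antisymm h)
    have hA : A.Nonempty := hACne.mono Finset.sdiff_subset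
    have hB := hI (A \ C) Finset.sdiff_subset hACne
    rw [filter_partition A (A \ C) Finset.sdiff_subset,
      Finset.sum_sdiff_eq_sub
        (Finset.filter_subset_filter _ (Finset.powerset_mono.2 Finset.sdiff_subset)),
      Finset.sdiff_sdiff_self_left, Finset.inter_eq_right.2 hC] at hB
    have h1 : ∑ S ∈ A.powerset.filter (fun S => S.Nonempty), I S = H A := by
      rw [sum_powerset_eq_filter hI0]; exact hAfull hA
    rw [← sum_powerset_eq_filter hI0, Gfun, if_neg hCA]
    linarith

/-- The information function, defined by Möbius inversion from the partial sums. -/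
private noncomputable def infoFn (H : Finset U → ℝ) (A S : Finset U) : ℝ :=
  if S.Nonempty ∧ S ⊆ A then ∑ T ∈ S.powerset, (-1 : ℝ) ^ (S \ T).card * Gfun H A T else 0

private lemma infoFn_sum {H : Finset U → ℝ} {A : Finset U} :
    ∀ C ⊆ A, ∑ S ∈ C.powerset, infoFn H A S = Gfun H A C := by
  intro C hC
  rw [← mobius_sum (Gfun H A) C]
  refine Finset.sum_congr rfl fun S hS => ?_
  rw [mem_powerset] at hS
  rcases S.eq_empty_or_nonempty with h | h
  · subst h
    simp [infoFn, Gfun_empty]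
  · rw [infoFn, if_pos ⟨h, hS.trans hC⟩]

private lemma infoFn_isInfoFn {H : Finset U → ℝ} {A : Finset U} :
    IsInfoFn H A (infoFn H A) := by
  intro B hB hBne
  have hA : A.Nonempty := hBne.mono hB
  have hI0 : infoFn H A ∅ = 0 := by simp [infoFn]
  have hABA : A \ B ≠ A := by
    intro h
    obtain ⟨x, hxB⟩ := hBne
    have hxA : x ∈ A := hB hxB
    rw [← h] at hxA
    exact (Finset.mem_sdiff.1 hxA).2 hxB
  rw [filter_partition A B hB,
    Finset.sum_sdiff_eq_sub
      (Finset.filter_subset_filter _ (Finset.powerset_mono.2 Finset.sdiff_subset)),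
    sum_powerset_eq_filter hI0, sum_powerset_eq_filter hI0,
    infoFn_sum A Finset.Subset.rfl, infoFn_sum (A \ B) Finset.sdiff_subset,
    Gfun, if_pos rfl, if_pos hA, Gfun, if_neg hABA,
    Finset.sdiff_sdiff_self_left, Finset.inter_eq_right.2 hB]
  ring

/-- Uniqueness: the partial sums determine the function. -/
private lemma unique_of_sums {A : Finset U} {I I' : Finset U → ℝ}
    (h0 : ∀ S : Finset U, ¬(S.Nonempty ∧ S ⊆ A) → I S = 0)
    (h0' : ∀ S : Finset U, ¬(S.Nonempty ∧ S ⊆ A) → I' S = 0)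
    (hsum : ∀ C ⊆ A, ∑ S ∈ C.powerset, I S = ∑ S ∈ C.powerset, I' S) :
    I = I' := by
  funext C
  induction C using Finset.strongInductionOn with
  | _ C ih =>
    by_cases hC : C ⊆ A
    · have h := hsum C hC
      rw [← Finset.sum_erase_add _ _ (Finset.mem_powerset_self C),
        ← Finset.sum_erase_add _ _ (Finset.mem_powerset_self C)] at h
      have he : ∑ S ∈ C.powerset.erase C, I S = ∑ S ∈ C.powerset.erase C, I' S :=
        Finset.sum_congr rfl fun S hS => by
          obtain ⟨hne, hsub⟩ := Finset.mem_erase.1 hS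
          exact ih S (lt_of_le_of_ne (Finset.mem_powerset.1 hsub) hne)
      linarith
    · rw [h0 C (fun h => hC h.2), h0' C (fun h => hC h.2)]

end AuxProof

/-- For every finite system `A` and every entropy function `H`, there is a
unique information function `I` on the nonempty subsets of `A` (represented as a function
on all finsets that vanishes off the nonempty subsets of `A`) satisfying the defining
linear system: for every nonempty `B ⊆ A`,
`∑_{nonempty S ⊆ A, S ∩ B ≠ ∅} I S = H B`. -/
theorem info_function_existsUnique [Fintype U] [DecidableEq U]
    (H : Finset U → ℝ) (A : Finset U) :
    ∃! I : Finset U → ℝ,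
      (∀ S : Finset U, ¬(S.Nonempty ∧ S ⊆ A) → I S = 0) ∧ IsInfoFn H A I := by
  have h0' : ∀ S : Finset U, ¬(S.Nonempty ∧ S ⊆ A) → infoFn H A S = 0 := fun S hS => by
    rw [infoFn, if_neg hS]
  refine ⟨infoFn H A, ⟨h0', infoFn_isInfoFn⟩, ?_⟩
  rintro I ⟨h0, hI⟩
  exact unique_of_sums h0 h0' fun C hC => by rw [sums_eq h0 hI C hC, infoFn_sum C hC]
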